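/- Let 0 < θ < 1. There exists K_θ < ∞ such that for every sequence x with x(0)=0 and Σ_{k≥1} x(k)² θ^{-k} < ∞ (which implies x is absolutely summable), the sequence of tails T(x)(k) = Σ_{j≥k} x(j) satisfies Σ_{k≥1} T(x)(k)² θ^{-k} ≤ K_θ² · Σ_{k≥1} x(k)² θ^{-k}. -/

import Mathlib

open ENNReal

set_option maxHeartbeats 1000000

private lemma amgm_aux {a b u : ℝ} (hu : 0 < u) :
    2 * (a * b) ≤ u * a ^ 2 + u⁻¹ * b ^ 2 := by
  have h1 : 0 ≤ (u * a - b) ^ 2 := sq_nonneg _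
  have h2 : 0 < u⁻¹ := inv_pos.mpr hu
  have h3 : u * u⁻¹ = 1 := mul_inv_cancel₀ hu.ne'
  nlinarith [mul_pos hu h2, sq_nonneg (u * a - b), mul_nonneg h2.le h1]

theorem tail_sums_bounded (θ : ℝ) (hθ0 : 0 < θ) (hθ1 : θ < 1) :
    ∃ K : ℝ, 0 < K ∧ ∀ x : ℕ → ℝ, x 0 = 0 →
      (∑' k : ℕ, ENNReal.ofReal ((x (k + 1)) ^ 2 / θ ^ (k + 1)) ≠ ⊤) →
      ∑' k : ℕ, ENNReal.ofReal ((∑' j : ℕ, x (k + 1 + j)) ^ 2 / θ ^ (k + 1)) ≤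
        ENNReal.ofReal (K ^ 2) *
          ∑' k : ℕ, ENNReal.ofReal ((x (k + 1)) ^ 2 / θ ^ (k + 1)) := by
  set s : ℝ := Real.sqrt θ with hs
  have hs0 : 0 < s := Real.sqrt_pos.mpr hθ0
  have hs1 : s < 1 := by
    have h := Real.sqrt_lt_sqrt hθ0.le hθ1
    rwa [Real.sqrt_one] at h
  have hsθ : s ^ 2 = θ := Real.sq_sqrt hθ0.le
  refine ⟨1 / (1 - s), div_pos one_pos (by linarith), ?_⟩
  intro x hx0 hfin
  set c : ℝ≥0∞ := ENNReal.ofReal s with hc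
  have hc0 : c ≠ 0 := by
    simp only [hc, ne_eq, ENNReal.ofReal_eq_zero, not_le]
    exact hs0
  have hcT : c ≠ ⊤ := ENNReal.ofReal_ne_top
  set d : ℝ≥0∞ := c⁻¹ with hd
  have hcd : c * d = 1 := ENNReal.mul_inv_cancel hc0 hcT
  -- basic conversions
  have hofc : ∀ n : ℕ, c ^ n = ENNReal.ofReal (s ^ n) := fun n =>
    (ENNReal.ofReal_pow hs0.le n).symm
  have hofd : ∀ n : ℕ, d ^ n = ENNReal.ofReal ((s⁻¹) ^ n) := by
    intro n
    rw [hd, hc, ← ENNReal.ofReal_inv_of_pos hs0, ← ENNReal.ofReal_pow (by positivity)]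
  have hconv : ∀ (t : ℝ) (m : ℕ), ENNReal.ofReal (t ^ 2 / θ ^ (m + 1)) =
      ENNReal.ofReal (t ^ 2) * d ^ (2 * (m + 1)) := by
    intro t m
    have h1 : ENNReal.ofReal (θ ^ (m + 1)) = c ^ (2 * (m + 1)) := by
      rw [← hsθ, ← pow_mul, hofc]
    rw [ENNReal.ofReal_div_of_pos (pow_pos hθ0 _), div_eq_mul_inv, h1, hd, ENNReal.inv_pow]
  -- summability facts
  have hg0 : ∀ k : ℕ, 0 ≤ x (k + 1) ^ 2 / θ ^ (k + 1) := fun k =>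
    div_nonneg (sq_nonneg _) (pow_pos hθ0 _).le
  have hsum_g : Summable (fun k : ℕ => x (k + 1) ^ 2 / θ ^ (k + 1)) := by
    have h := ENNReal.tsum_coe_ne_top_iff_summable.mp (by simpa [ENNReal.ofReal] using hfin)
    have h2 := NNReal.summable_coe.mpr h
    refine h2.congr fun k => ?_
    simp [Real.coe_toNNReal _ (hg0 k)]
  have habs : Summable (fun m : ℕ => |x m|) := by
    have hgeo : Summable (fun k : ℕ => θ ^ (k + 1)) := by
      refine ((summable_geometric_of_lt_one hθ0.le hθ1).mul_left θ).congr fun k => ?_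
      rw [← pow_succ']
    have hbound : ∀ k : ℕ, |x (k + 1)| ≤ (x (k + 1) ^ 2 / θ ^ (k + 1) + θ ^ (k + 1)) / 2 := by
      intro k
      have h := amgm_aux (a := |x (k + 1)|) (b := 1) (inv_pos.mpr (pow_pos hθ0 (k + 1)))
      rw [sq_abs, inv_inv] at h
      rw [div_eq_inv_mul (x (k + 1) ^ 2)] at *
      nlinarith [h]
    have h1 : Summable (fun k : ℕ => (x (k + 1) ^ 2 / θ ^ (k + 1) + θ ^ (k + 1)) / 2) :=
      (hsum_g.add hgeo).div_const 2
    have h2 : Summable (fun k : ℕ => |x (k + 1)|) :=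
      h1.of_nonneg_of_le (fun k => abs_nonneg _) hbound
    exact (summable_nat_add_iff 1).mp h2
  have htail : ∀ n : ℕ, Summable (fun j : ℕ => |x (n + j)|) := by
    intro n
    refine ((summable_nat_add_iff n).mpr habs).congr fun j => ?_
    rw [add_comm]
  have htailx : ∀ n : ℕ, Summable (fun j : ℕ => x (n + j)) := fun n => (htail n).of_abs
  -- AM-GM in ENNReal with geometric weights
  have amgmE : ∀ (a : ℕ → ℝ), (∀ j, 0 ≤ a j) → ∀ j l : ℕ,
      2 * (ENNReal.ofReal (a j) * ENNReal.ofReal (a l)) ≤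
        c ^ l * d ^ j * (ENNReal.ofReal (a j)) ^ 2 +
          c ^ j * d ^ l * (ENNReal.ofReal (a l)) ^ 2 := by
    intro a ha j l
    have hu : (0 : ℝ) < s ^ l * (s⁻¹) ^ j := by positivity
    have h := amgm_aux (a := a j) (b := a l) hu
    have hinv : (s ^ l * (s⁻¹) ^ j)⁻¹ = s ^ j * (s⁻¹) ^ l := by
      rw [mul_inv, inv_pow, inv_pow, inv_inv]; ring
    rw [hinv] at h
    calc 2 * (ENNReal.ofReal (a j) * ENNReal.ofReal (a l))
        = ENNReal.ofReal (2 * (a j * a l)) := by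
          rw [ENNReal.ofReal_mul (by norm_num), ENNReal.ofReal_mul (ha j),
            ENNReal.ofReal_ofNat]
      _ ≤ ENNReal.ofReal (s ^ l * (s⁻¹) ^ j * a j ^ 2 + s ^ j * (s⁻¹) ^ l * a l ^ 2) :=
          ENNReal.ofReal_le_ofReal h
      _ = c ^ l * d ^ j * (ENNReal.ofReal (a j)) ^ 2 +
          c ^ j * d ^ l * (ENNReal.ofReal (a l)) ^ 2 := by
          rw [ENNReal.ofReal_add (by positivity) (by positivity),
            ENNReal.ofReal_mul (by positivity), ENNReal.ofReal_mul (by positivity),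
            ENNReal.ofReal_mul (by positivity), ENNReal.ofReal_mul (by positivity),
            hofc, hofd, hofc, hofd, ENNReal.ofReal_pow (ha j), ENNReal.ofReal_pow (ha l)]
  -- Step B: Cauchy-Schwarz-type bound
  have stepB : ∀ (a : ℕ → ℝ), (∀ j, 0 ≤ a j) →
      (∑' j : ℕ, ENNReal.ofReal (a j)) ^ 2 ≤
        (1 - c)⁻¹ * ∑' l : ℕ, d ^ l * (ENNReal.ofReal (a l)) ^ 2 := by
    intro a ha
    set b : ℕ → ℝ≥0∞ := fun j => ENNReal.ofReal (a j) with hb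
    have expand : (∑' j, b j) * (∑' j, b j) = ∑' (j : ℕ), ∑' (l : ℕ), b j * b l := by
      rw [← ENNReal.tsum_mul_right]
      exact tsum_congr fun j => ENNReal.tsum_mul_left.symm
    have key : 2 * ((∑' j, b j) * (∑' j, b j)) ≤
        2 * ((1 - c)⁻¹ * ∑' l : ℕ, d ^ l * (b l) ^ 2) := by
      calc 2 * ((∑' j, b j) * (∑' j, b j))
          = ∑' (j : ℕ), ∑' (l : ℕ), 2 * (b j * b l) := by
            rw [expand, ← ENNReal.tsum_mul_left]
            exact tsum_congr fun j => ENNReal.tsum_mul_left.symm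
        _ ≤ ∑' (j : ℕ), ∑' (l : ℕ),
              (c ^ l * d ^ j * (b j) ^ 2 + c ^ j * d ^ l * (b l) ^ 2) :=
            ENNReal.tsum_le_tsum fun j => ENNReal.tsum_le_tsum fun l => amgmE a ha j l
        _ = (∑' (j : ℕ), ∑' (l : ℕ), c ^ l * d ^ j * (b j) ^ 2) +
              ∑' (j : ℕ), ∑' (l : ℕ), c ^ j * d ^ l * (b l) ^ 2 := by
            rw [← ENNReal.tsum_add]
            exact tsum_congr fun j => ENNReal.tsum_add
        _ = 2 * ∑' (j : ℕ), ∑' (l : ℕ), c ^ j * d ^ l * (b l) ^ 2 := by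
            rw [two_mul]
            congr 1
            rw [ENNReal.tsum_comm]
        _ = 2 * ((1 - c)⁻¹ * ∑' l : ℕ, d ^ l * (b l) ^ 2) := by
            congr 1
            simp only [mul_assoc]
            calc ∑' (j : ℕ), ∑' (l : ℕ), c ^ j * (d ^ l * (b l) ^ 2)
                = ∑' (j : ℕ), c ^ j * ∑' (l : ℕ), d ^ l * (b l) ^ 2 :=
                  tsum_congr fun j => ENNReal.tsum_mul_left
              _ = (∑' (j : ℕ), c ^ j) * ∑' (l : ℕ), d ^ l * (b l) ^ 2 :=
                  ENNReal.tsum_mul_right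
              _ = (1 - c)⁻¹ * ∑' (l : ℕ), d ^ l * (b l) ^ 2 := by
                  rw [ENNReal.tsum_geometric]
    have h2 := (ENNReal.mul_le_mul_iff_right (by norm_num) (by norm_num)).mp key
    rwa [sq]
  -- Step A: pointwise bound for each tail
  have stepA : ∀ k : ℕ, ENNReal.ofReal ((∑' j : ℕ, x (k + 1 + j)) ^ 2 / θ ^ (k + 1)) ≤
      (∑' j : ℕ, ENNReal.ofReal |x (k + 1 + j)|) ^ 2 * d ^ (2 * (k + 1)) := by
    intro k
    rw [hconv]
    gcongr
    have hsumm : Summable (fun j : ℕ => ‖x (k + 1 + j)‖) := by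
      simpa only [Real.norm_eq_abs] using htail (k + 1)
    have hT : |∑' j : ℕ, x (k + 1 + j)| ≤ ∑' j : ℕ, |x (k + 1 + j)| := by
      simpa only [Real.norm_eq_abs] using norm_tsum_le_tsum_norm hsumm
    calc ENNReal.ofReal ((∑' j : ℕ, x (k + 1 + j)) ^ 2)
        = (ENNReal.ofReal |∑' j : ℕ, x (k + 1 + j)|) ^ 2 := by
          rw [← ENNReal.ofReal_pow (abs_nonneg _), sq_abs]
      _ ≤ (ENNReal.ofReal (∑' j : ℕ, |x (k + 1 + j)|)) ^ 2 := by
          gcongr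

      _ = (∑' j : ℕ, ENNReal.ofReal |x (k + 1 + j)|) ^ 2 := by
          rw [ENNReal.ofReal_tsum_of_nonneg (fun _ => abs_nonneg _) (htail (k + 1))]
  -- exponent juggling
  have hpow : ∀ k l : ℕ, d ^ l * d ^ (2 * (k + 1)) = c ^ l * d ^ (2 * (k + l + 1)) := by
    intro k l
    have e : 2 * (k + l + 1) = l + (l + 2 * (k + 1)) := by ring
    rw [e, pow_add d l, pow_add d l, ← mul_assoc, ← mul_pow, hcd, one_pow, one_mul]
  set G : ℕ → ℝ≥0∞ := fun m => ENNReal.ofReal (x (m + 1) ^ 2) * d ^ (2 * (m + 1)) with hG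
  have hGsum : (∑' m : ℕ, G m) = ∑' k : ℕ, ENNReal.ofReal (x (k + 1) ^ 2 / θ ^ (k + 1)) :=
    tsum_congr fun m => by simp only [hG]; exact (hconv (x (m + 1)) m).symm
  -- main calculation
  calc ∑' k : ℕ, ENNReal.ofReal ((∑' j : ℕ, x (k + 1 + j)) ^ 2 / θ ^ (k + 1))
      ≤ ∑' k : ℕ, (∑' j : ℕ, ENNReal.ofReal |x (k + 1 + j)|) ^ 2 * d ^ (2 * (k + 1)) :=
        ENNReal.tsum_le_tsum stepA
    _ ≤ ∑' k : ℕ, ((1 - c)⁻¹ * ∑' l : ℕ, d ^ l * (ENNReal.ofReal |x (k + 1 + l)|) ^ 2) *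
          d ^ (2 * (k + 1)) := by
        gcongr with k
        exact stepB (fun j => |x (k + 1 + j)|) (fun j => abs_nonneg _)
    _ = (1 - c)⁻¹ * ∑' k : ℕ, ∑' l : ℕ, c ^ l * G (k + l) := by
        rw [← ENNReal.tsum_mul_left]
        refine tsum_congr fun k => ?_
        rw [mul_assoc]
        congr 1
        rw [← ENNReal.tsum_mul_right]
        refine tsum_congr fun l => ?_
        have e : k + 1 + l = k + l + 1 := by omega
        have e2 : ENNReal.ofReal |x (k + l + 1)| ^ 2 = ENNReal.ofReal (x (k + l + 1) ^ 2) := by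
          rw [← ENNReal.ofReal_pow (abs_nonneg _), sq_abs]
        calc d ^ l * ENNReal.ofReal |x (k + 1 + l)| ^ 2 * d ^ (2 * (k + 1))
            = d ^ l * d ^ (2 * (k + 1)) * ENNReal.ofReal (x (k + l + 1) ^ 2) := by
              rw [e, e2]; ring
          _ = c ^ l * (ENNReal.ofReal (x (k + l + 1) ^ 2) * d ^ (2 * (k + l + 1))) := by
              rw [hpow k l]; ring
          _ = c ^ l * G (k + l) := by simp only [hG]
    _ = (1 - c)⁻¹ * ∑' l : ℕ, c ^ l * ∑' k : ℕ, G (k + l) := by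
        rw [ENNReal.tsum_comm]
        congr 1
        exact tsum_congr fun l => ENNReal.tsum_mul_left
    _ ≤ (1 - c)⁻¹ * ∑' l : ℕ, c ^ l * ∑' m : ℕ, G m := by
        refine mul_le_mul_right (ENNReal.tsum_le_tsum fun l => mul_le_mul_right ?_ _) _
        exact ENNReal.tsum_comp_le_tsum_of_injective (add_left_injective l) G
    _ = (1 - c)⁻¹ * ((1 - c)⁻¹ * ∑' m : ℕ, G m) := by
        rw [ENNReal.tsum_mul_right, ENNReal.tsum_geometric]
    _ = ENNReal.ofReal ((1 / (1 - s)) ^ 2) *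
          ∑' k : ℕ, ENNReal.ofReal (x (k + 1) ^ 2 / θ ^ (k + 1)) := by
        rw [← hGsum, ← mul_assoc]
        congr 1
        have h1s : (0 : ℝ) < 1 - s := by linarith
        rw [one_div, sq, ENNReal.ofReal_mul (by positivity),
          ENNReal.ofReal_inv_of_pos h1s, ENNReal.ofReal_sub _ hs0.le, ENNReal.ofReal_one]
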